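/- arXiv:2302.07604 — 7 statements merged into one kernel-verified Lean document; each statement's English description precedes it below -/
import Mathlib

section
/- Let H be a finite-dimensional commutative semisimple ℂ-algebra with basis B = {x_1, ..., x_m}, x_1 = 1, equipped with an involution * on B such that the coefficient of 1 in x_i x_j is nonzero iff j = i*, with positive value 1/h_i when j = i*. Let μ_1, ..., μ_m be the distinct algebra homomorphisms H → ℂ, satisfying μ_j(x_{i*}) = conj(μ_j(x_i)). Then the first orthogonality relation holds: ∑_{i=1}^m h_i μ_j(x_i) μ_k(x_{i*}) = δ_{j,k} n_j, where the n_j are defined by τ = ∑_j (1/n_j) μ_j with τ the functional sending x_i to δ_{i,1}; moreover each n_j is a positive real number. -/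
open scoped BigOperators ComplexConjugate

/-- first orthogonality relation for abelian hypergroups, and
positivity of the formal codegrees. The hypergroup is encoded by its structure
constants `N`, involution `st` on the basis, orders `h i = 1/N_{i,i*}^1`,
its complete family of distinct characters `μ`, and formal codegrees `n`
defined via `τ = ∑_j (1/n_j) μ_j`. -/
theorem hypergroup_first_orthogonality {m : ℕ} [NeZero m]
    (N : Fin m → Fin m → Fin m → ℂ) (st : Fin m → Fin m)
    (h : Fin m → ℝ) (μ : Fin m → Fin m → ℂ) (n : Fin m → ℂ)
    -- H is a commutative associative unital algebra with basis x_1 = 1, ..., x_m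
    (hcomm : ∀ i j k, N i j k = N j i k)
    (hassoc : ∀ i j k l, ∑ p, N i j p * N p k l = ∑ q, N j k q * N i q l)
    (hunit : ∀ i k, N 0 i k = if k = i then 1 else 0)
    -- involution on the basis
    (hst : ∀ i, st (st i) = i)
    -- the coefficient of 1 in x_i x_j is 1/h_i > 0 if j = i*, and 0 otherwise
    (hpos : ∀ i, 0 < h i)
    (hN1 : ∀ i, N i (st i) 0 = (((h i)⁻¹ : ℝ) : ℂ))
    (hN0 : ∀ i j, j ≠ st i → N i j 0 = 0)
    -- μ_1, ..., μ_m are the distinct algebra homomorphisms H → ℂ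
    (hμ1 : ∀ j, μ j 0 = 1)
    (hμmul : ∀ j a b, μ j a * μ j b = ∑ k, N a b k * μ j k)
    (hμinj : Function.Injective μ)
    (hμcomplete : ∀ f : Fin m → ℂ, f 0 = 1 →
      (∀ a b, f a * f b = ∑ k, N a b k * f k) → ∃ j, f = μ j)
    -- μ_j(x_{i*}) = conj(μ_j(x_i))
    (hconj : ∀ j i, μ j (st i) = conj (μ j i))
    -- formal codegrees: τ = ∑_j (1/n_j) μ_j where τ(x_i) = δ_{i,1}
    (hn : ∀ j, n j ≠ 0)
    (hτ : ∀ i, ∑ j, (n j)⁻¹ * μ j i = if i = 0 then 1 else 0) :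
    (∀ j k, ∑ i, (h i : ℂ) * μ j i * μ k (st i) = if j = k then n j else 0) ∧
    (∀ j, ∃ r : ℝ, 0 < r ∧ n j = (r : ℂ)) := by
  have hstinj : Function.Injective st := fun a b hab => by
    rw [← hst a, hab, hst]
  -- second orthogonality relation
  have second : ∀ i l, ∑ j, (n j)⁻¹ * μ j i * μ j (st l)
      = if l = i then (((h i)⁻¹ : ℝ) : ℂ) else 0 := by
    intro i l
    have e1 : ∑ j, (n j)⁻¹ * μ j i * μ j (st l)
        = ∑ k, N i (st l) k * ∑ j, (n j)⁻¹ * μ j k := by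
      have e0 : ∀ j, (n j)⁻¹ * μ j i * μ j (st l)
          = ∑ k, (n j)⁻¹ * (N i (st l) k * μ j k) := by
        intro j
        rw [← Finset.mul_sum, ← hμmul]; ring
      rw [Finset.sum_congr rfl fun j _ => e0 j, Finset.sum_comm]
      refine Finset.sum_congr rfl fun k _ => ?_
      rw [Finset.mul_sum]
      exact Finset.sum_congr rfl fun j _ => by ring
    rw [e1]
    have e2 : ∀ k : Fin m, N i (st l) k * ∑ j, (n j)⁻¹ * μ j k
        = if k = 0 then N i (st l) 0 else 0 := by
      intro k
      rw [hτ k]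
      split_ifs with hk
      · subst hk; ring
      · ring
    rw [Finset.sum_congr rfl fun k _ => e2 k, Finset.sum_ite_eq' Finset.univ 0
      fun _ => N i (st l) 0]
    simp only [Finset.mem_univ, if_true]
    by_cases hli : l = i
    · subst hli; rw [hN1, if_pos rfl]
    · rw [hN0 i (st l) (fun hc => hli (hstinj hc)), if_neg hli]
  -- matrices
  set A : Matrix (Fin m) (Fin m) ℂ := Matrix.of fun i j => μ j i with hA
  set B : Matrix (Fin m) (Fin m) ℂ :=
    Matrix.of fun j l => (n j)⁻¹ * μ j (st l) * (h l : ℂ) with hB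
  have hAB : A * B = 1 := by
    ext i l
    rw [Matrix.mul_apply, Matrix.one_apply]
    have e3 : ∑ j, A i j * B j l
        = (∑ j, (n j)⁻¹ * μ j i * μ j (st l)) * (h l : ℂ) := by
      rw [Finset.sum_mul]
      exact Finset.sum_congr rfl fun j _ => by simp only [hA, hB, Matrix.of_apply]; ring
    rw [e3, second i l]
    by_cases hli : l = i
    · subst hli
      rw [if_pos rfl, if_pos rfl]
      rw [← Complex.ofReal_mul, inv_mul_cancel₀ (ne_of_gt (hpos l))]
      norm_num
    · rw [if_neg hli, if_neg (fun hc => hli hc.symm), zero_mul]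
  have hBA : B * A = 1 := mul_eq_one_comm.mp hAB
  have first : ∀ j k, ∑ i, (h i : ℂ) * μ j i * μ k (st i)
      = if j = k then n j else 0 := by
    intro j k
    have e4 := congrFun (congrFun hBA k) j
    rw [Matrix.mul_apply, Matrix.one_apply] at e4
    have e5 : ∑ i, (h i : ℂ) * μ j i * μ k (st i)
        = n k * ∑ i, B k i * A i j := by
      rw [Finset.mul_sum]
      refine Finset.sum_congr rfl fun i _ => ?_
      simp only [hA, hB, Matrix.of_apply]
      field_simp [hn k]
    rw [e5, e4]
    by_cases hjk : j = k
    · subst hjk; rw [if_pos rfl, if_pos rfl, mul_one]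
    · rw [if_neg (fun hc => hjk hc.symm), if_neg hjk, mul_zero]
  refine ⟨first, fun j => ?_⟩
  refine ⟨∑ i, h i * Complex.normSq (μ j i), ?_, ?_⟩
  · refine Finset.sum_pos' (fun i _ => mul_nonneg (hpos i).le (Complex.normSq_nonneg _))
      ⟨0, Finset.mem_univ 0, ?_⟩
    rw [hμ1 j, Complex.normSq_one, mul_one]
    exact hpos 0
  · have e6 := first j j
    rw [if_pos rfl] at e6
    rw [← e6]
    push_cast
    refine Finset.sum_congr rfl fun i _ => ?_
    rw [hconj j i, mul_assoc, Complex.mul_conj]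
end

section
/- Let (H, B) be a normalized hypergroup (all structure constants N_{ab}^c sum to 1 over c for fixed a, b), with B = {x_1, ..., x_m}, x_1 = 1, and let μ_1 : H → ℂ be the augmentation map sending every basis element to 1. Then the primitive central idempotent F_1 corresponding to μ_1 is F_1 = (1/n(H)) ∑_{i=1}^m h_{i*} x_i, where h_i := 1/N_{i,i*}^1 and n(H) := ∑_{i=1}^m h_i. -/
open scoped BigOperators

/-- for a normalized hypergroup (not necessarily abelian), the
primitive central idempotent `F_1` corresponding to the augmentation character
is `F_1 = (1/n(H)) ∑_i h_{i*} x_i`, where `n(H) = ∑_i h_i`. The idempotent is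
characterized by `x F_1 = μ_1(x) F_1 = F_1` (on basis elements, both sides)
together with `μ_1(F_1) = 1`, i.e. `∑_i F_i = 1`. -/
theorem normalized_hypergroup_augmentation_idempotent {m : ℕ} [NeZero m]
    (N : Fin m → Fin m → Fin m → ℂ) (st : Fin m → Fin m)
    (h : Fin m → ℝ) (F : Fin m → ℂ)
    (hassoc : ∀ i j k l, ∑ p, N i j p * N p k l = ∑ q, N j k q * N i q l)
    (hunitL : ∀ i k, N 0 i k = if k = i then 1 else 0)
    (hunitR : ∀ i k, N i 0 k = if k = i then 1 else 0)
    (hst : ∀ i, st (st i) = i)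
    (hpos : ∀ i, 0 < h i)
    (hN1 : ∀ i, N i (st i) 0 = (((h i)⁻¹ : ℝ) : ℂ))
    (hN0 : ∀ i j, j ≠ st i → N i j 0 = 0)
    -- normalized: ∑_c N_{ab}^c = 1
    (hnorm : ∀ a b, ∑ c, N a b c = 1)
    -- F = F_1: x_l F = F and F x_l = F for all basis elements x_l, and μ_1(F) = 1
    (hFl : ∀ l k, ∑ i, F i * N l i k = F k)
    (hFr : ∀ l k, ∑ i, F i * N i l k = F k)
    (hFsum : ∑ i, F i = 1) :
    ∀ i, F i = (((h (st i)) / (∑ i', h i') : ℝ) : ℂ) := by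
  have hinv : Function.Involutive st := hst
  -- from hFl l 0 : F (st l) * (h l)⁻¹ = F 0
  have key : ∀ l, F (st l) * (((h l)⁻¹ : ℝ) : ℂ) = F 0 := by
    intro l
    have := hFl l 0
    rw [Finset.sum_eq_single (st l)] at this
    · rw [hN1 l] at this; exact this
    · intro b _ hb
      rw [hN0 l b hb, mul_zero]
    · intro hb; exact absurd (Finset.mem_univ _) hb
  have hne : ∀ l, (((h l)⁻¹ : ℝ) : ℂ) ≠ 0 := by
    intro l
    exact_mod_cast inv_ne_zero (hpos l).ne'
  have key2 : ∀ i, F i = F 0 * ((h (st i) : ℝ) : ℂ) := by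
    intro i
    have hk := key (st i)
    rw [hst i] at hk
    have hne' : ((h (st i) : ℝ) : ℂ) ≠ 0 := by
      exact_mod_cast (hpos (st i)).ne'
    field_simp at hk
    rw [← hk, mul_assoc, ← Complex.ofReal_mul, one_div_mul_cancel (hpos (st i)).ne', Complex.ofReal_one, mul_one]
  have hsum : F 0 * ((∑ i', h i' : ℝ) : ℂ) = 1 := by
    have : ∑ i, F i = F 0 * ((∑ i', h (st i') : ℝ) : ℂ) := by
      push_cast
      rw [Finset.mul_sum]
      exact Finset.sum_congr rfl fun i _ => key2 i
    have hperm : ∑ i', h (st i') = ∑ i', h i' :=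
      Fintype.sum_bijective st hinv.bijective _ _ (fun i => rfl)
    rw [hperm] at this
    rw [← this, hFsum]
  have hn : ((∑ i', h i' : ℝ) : ℂ) ≠ 0 := by
    have : (0:ℝ) < ∑ i', h i' :=
      Finset.sum_pos (fun i _ => hpos i) Finset.univ_nonempty
    exact_mod_cast this.ne'
  intro i
  rw [key2 i]
  have hF0 : F 0 = (((∑ i', h i' : ℝ) : ℂ))⁻¹ :=
    eq_inv_of_mul_eq_one_left (by linear_combination hsum)
  rw [hF0]
  push_cast
  ring
end

section
/- Let (H, B) be a symmetric real-nonnegative hypergroup and x_i ∈ B a grouplike element. Then for any basis element x_j ∈ B, the product x_i x_j is a positive scalar multiple of a single basis element; more precisely x_i x_j = (d_i d_j / d_k) x_k for some x_k ∈ B, where d denotes FPdim. -/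
open scoped BigOperators

/-- A basis element `g` is grouplike if `h_g x_g x_{g*} = x_1`. -/
def IsGrouplike {m : ℕ} [NeZero m] (N : Fin m → Fin m → Fin m → ℝ)
    (st : Fin m → Fin m) (h : Fin m → ℝ) (g : Fin m) : Prop :=
  ∀ k, h g * N g (st g) k = if k = 0 then 1 else 0

/-- in a symmetric real-nonnegative hypergroup, if `x_i` is a
grouplike element then for any basis element `x_j` the product `x_i x_j` is a
positive scalar multiple of a single basis element:
`x_i x_j = (d_i d_j / d_k) x_k` for some `k`. -/
theorem grouplike_mul_basis_single {m : ℕ} [NeZero m]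
    (N : Fin m → Fin m → Fin m → ℝ) (st : Fin m → Fin m)
    (h : Fin m → ℝ) (d : Fin m → ℝ)
    (hassoc : ∀ i j k l, ∑ p, N i j p * N p k l = ∑ q, N j k q * N i q l)
    (hunit : ∀ i k, N 0 i k = if k = i then 1 else 0)
    (hst : ∀ i, st (st i) = i)
    (hnneg : ∀ i j k, 0 ≤ N i j k)
    (hsymm : ∀ i j, N i j 0 = N j i 0)
    (hpos : ∀ i, 0 < h i)
    (hN1 : ∀ i, N i (st i) 0 = (h i)⁻¹)
    (hN0 : ∀ i j, j ≠ st i → N i j 0 = 0)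
    (hd0 : d 0 = 1)
    (hdpos : ∀ i, 0 < d i)
    (hdmul : ∀ a b, d a * d b = ∑ k, N a b k * d k)
    (i : Fin m) (hi : IsGrouplike N st h i) :
    ∀ j, ∃ k, ∀ l, N i j l = if l = k then d i * d j / d k else 0 := by
  intro j
  have hipos := hpos i
  -- explicit form of the grouplike condition
  have hii : ∀ q, N i (st i) q = if q = 0 then (h i)⁻¹ else 0 := by
    intro q
    have := hi q
    rcases eq_or_ne q 0 with rfl | hq
    · simp only [if_pos rfl, ↓reduceIte] at this ⊢
      field_simp at this ⊢
      linarith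
    · simp only [if_neg hq] at this ⊢
      nlinarith
  -- `x_{st i} x_i = (h i)⁻¹ x_0` as well
  have hsum1 : ∑ q, N i (st i) q * d q = (h i)⁻¹ := by
    simp [hii, ite_mul, hd0]
  have hsum2 : ∑ q, N (st i) i q * d q = (h i)⁻¹ := by
    rw [← hdmul, mul_comm, hdmul, hsum1]
  have hst0 : N (st i) i 0 = (h i)⁻¹ := by rw [hsymm, hN1]
  have hzero : ∀ q, q ≠ 0 → N (st i) i q = 0 := by
    have hsplit := Finset.sum_eq_sum_sdiff_singleton_add
      (Finset.mem_univ (0 : Fin m)) (fun q => N (st i) i q * d q)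
    rw [hsplit, hst0, hd0, mul_one] at hsum2
    have h0 : ∑ q ∈ Finset.univ \ {0}, N (st i) i q * d q = 0 := by linarith
    have hz := (Finset.sum_eq_zero_iff_of_nonneg
      (fun q _ => mul_nonneg (hnneg _ _ _) (hdpos q).le)).mp h0
    intro q hq
    have hq' := hz q (by simp [hq])
    exact (mul_eq_zero.mp hq').resolve_right (hdpos q).ne'
  -- there is some k with positive coefficient
  have hex : ∃ k, 0 < N i j k := by
    by_contra hcon
    push_neg at hcon
    have hall : ∀ k, N i j k = 0 := fun k => le_antisymm (hcon k) (hnneg _ _ _)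
    have hm := hdmul i j
    simp [hall] at hm
    rcases hm with hm | hm
    · exact (hdpos i).ne' hm
    · exact (hdpos j).ne' hm
  obtain ⟨k, hk⟩ := hex
  -- `x_{st i} x_k` is supported only at `j`
  have hstk : ∀ l, l ≠ j → N (st i) k l = 0 := by
    intro l hl
    have ha := hassoc (st i) i j l
    have hL : ∑ p, N (st i) i p * N p j l = 0 := by
      refine Finset.sum_eq_zero (fun p _ => ?_)
      rcases eq_or_ne p 0 with rfl | hp
      · simp [hunit, hl]
      · simp [hzero p hp]
    rw [hL] at ha
    have hz := (Finset.sum_eq_zero_iff_of_nonneg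
      (fun q _ => mul_nonneg (hnneg _ _ _) (hnneg _ _ _))).mp ha.symm
    have := hz k (Finset.mem_univ k)
    exact (mul_eq_zero.mp this).resolve_left hk.ne'
  -- the key associativity relation
  have key : ∀ l, N (st i) k j * N i j l = if l = k then (h i)⁻¹ else 0 := by
    intro l
    have ha := hassoc i (st i) k l
    have hL : ∑ p, N i (st i) p * N p k l = if l = k then (h i)⁻¹ else 0 := by
      simp [hii, ite_mul, hunit]
    have hR : ∑ q, N (st i) k q * N i q l = N (st i) k j * N i j l := by
      refine Finset.sum_eq_single j (fun q _ hq => by simp [hstk q hq]) (by simp)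
    rw [hL, hR] at ha
    exact ha.symm
  -- the coefficient `N (st i) k j` is positive
  have hstkj : 0 < N (st i) k j := by
    have hkk := key k
    rw [if_pos rfl] at hkk
    nlinarith [hnneg (st i) k j, hnneg i j k, inv_pos.mpr hipos]
  -- all coefficients of x_i x_j vanish except at k
  have hvan : ∀ l, l ≠ k → N i j l = 0 := by
    intro l hl
    have := key l
    rw [if_neg hl] at this
    exact (mul_eq_zero.mp this).resolve_left hstkj.ne'
  refine ⟨k, fun l => ?_⟩
  rcases eq_or_ne l k with rfl | hl
  · have hm := hdmul i j
    have : ∑ q, N i j q * d q = N i j l * d l := by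
      refine Finset.sum_eq_single l (fun q _ hq => by simp [hvan q hq]) (by simp)
    rw [this] at hm
    rw [if_pos rfl, eq_div_iff (hdpos l).ne']
    linarith
  · rw [if_neg hl]
    exact hvan l hl
end

section
/- Let (H, B) be an abelian real-nonnegative hypergroup and let μ_j : H → ℂ be a character such that μ_j(x_m) = d_m ω_m and μ_j(x_n) = d_n ω_n for complex numbers ω_m, ω_n of absolute value 1, where d_i = FPdim(x_i). Then for every basis element x_p appearing with positive coefficient in x_m x_n, one has μ_j(x_p) = ω_m ω_n d_p. -/
open scoped BigOperators

/-- in an abelian real-nonnegative hypergroup, if a character `μ`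
satisfies `μ(x_a) = d_a ω_a` and `μ(x_b) = d_b ω_b` with `|ω_a| = |ω_b| = 1`,
then `μ(x_p) = ω_a ω_b d_p` for every constituent `x_p` of `x_a x_b`. -/
theorem character_on_constituents {m : ℕ} [NeZero m]
    (N : Fin m → Fin m → Fin m → ℝ) (st : Fin m → Fin m)
    (d : Fin m → ℝ) (μ : Fin m → ℂ)
    (hcomm : ∀ i j k, N i j k = N j i k)
    (hassoc : ∀ i j k l, ∑ p, N i j p * N p k l = ∑ q, N j k q * N i q l)
    (hunit : ∀ i k, N 0 i k = if k = i then 1 else 0)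
    (hst : ∀ i, st (st i) = i)
    (hnneg : ∀ i j k, 0 ≤ N i j k)
    (hN1pos : ∀ i, 0 < N i (st i) 0)
    (hN0 : ∀ i j, j ≠ st i → N i j 0 = 0)
    -- FPdim, the character positive on the basis
    (hd0 : d 0 = 1)
    (hdpos : ∀ i, 0 < d i)
    (hdmul : ∀ a b, d a * d b = ∑ k, N a b k * d k)
    -- μ is a character and satisfies the Frobenius–Perron bound |μ(x_i)| ≤ d_i
    (hμ0 : μ 0 = 1)
    (hμmul : ∀ a b, μ a * μ b = ∑ k, (N a b k : ℂ) * μ k)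
    (hbound : ∀ i, ‖μ i‖ ≤ d i)
    (a b : Fin m) (ωa ωb : ℂ)
    (hωa : ‖ωa‖ = 1) (hωb : ‖ωb‖ = 1)
    (hμa : μ a = (d a : ℂ) * ωa) (hμb : μ b = (d b : ℂ) * ωb) :
    ∀ p, 0 < N a b p → μ p = ωa * ωb * (d p : ℂ) := by
  intro p hp
  set ω : ℂ := ωa * ωb with hω
  have hωabs : ‖ω‖ = 1 := by rw [hω, norm_mul, hωa, hωb]; ring
  have hωconj : (starRingEnd ℂ) ω * ω = 1 := by
    rw [mul_comm, Complex.mul_conj]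
    rw [← Complex.sq_norm, hωabs]
    norm_num
  have hS : (∑ k, (N a b k : ℂ) * μ k) * (starRingEnd ℂ) ω
      = ((d a * d b : ℝ) : ℂ) := by
    rw [← hμmul, hμa, hμb]
    push_cast
    have : (d a : ℂ) * ωa * ((d b : ℂ) * ωb) * (starRingEnd ℂ) ω
        = (d a : ℂ) * (d b : ℂ) * (ω * (starRingEnd ℂ) ω) := by
      rw [hω]; ring
    rw [this, mul_comm ω, hωconj, mul_one]
  have hS2 : ∑ k, N a b k * (μ k * (starRingEnd ℂ) ω).re = d a * d b := by
    have : (∑ k, (N a b k : ℂ) * (μ k * (starRingEnd ℂ) ω)).re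
        = (((d a * d b : ℝ) : ℂ)).re := by
      rw [← hS, Finset.sum_mul]
      congr 1
      exact Finset.sum_congr rfl fun k _ => by ring
    simpa [Complex.re_sum, Complex.ofReal_mul] using this
  have hterm : ∀ k, (μ k * (starRingEnd ℂ) ω).re ≤ d k := fun k =>
    le_trans (Complex.re_le_norm _) (by
      rw [norm_mul, Complex.norm_conj, hωabs, mul_one]; exact hbound k)
  have hzero : ∀ k ∈ Finset.univ,
      N a b k * (d k - (μ k * (starRingEnd ℂ) ω).re) = 0 := by
    apply (Finset.sum_eq_zero_iff_of_nonneg ?_).1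
    · have : ∑ k, N a b k * (d k - (μ k * (starRingEnd ℂ) ω).re) = 0 := by
        simp only [mul_sub, Finset.sum_sub_distrib, hS2, ← hdmul, sub_self]
      exact this
    · intro k _
      exact mul_nonneg (hnneg a b k) (sub_nonneg.2 (hterm k))
  have hkey : (μ p * (starRingEnd ℂ) ω).re = d p := by
    have := hzero p (Finset.mem_univ p)
    have h := (mul_eq_zero.1 this).resolve_left (ne_of_gt hp)
    linarith [sub_eq_zero.1 h]
  set z : ℂ := μ p * (starRingEnd ℂ) ω with hz
  have habsz : ‖z‖ ≤ d p := by
    rw [hz, norm_mul, Complex.norm_conj, hωabs, mul_one]; exact hbound p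
  have him : z.im = 0 := by
    have h1 : z.re ^ 2 + z.im ^ 2 = ‖z‖ ^ 2 := by
      rw [Complex.sq_norm, Complex.normSq_apply]; ring
    have h2 : ‖z‖ ^ 2 ≤ d p ^ 2 :=
      pow_le_pow_left₀ (norm_nonneg z) habsz 2
    have : z.im ^ 2 ≤ 0 := by rw [hkey] at h1; nlinarith
    nlinarith [sq_nonneg z.im]
  have hzval : z = (d p : ℂ) := Complex.ext (by simp [hkey]) (by simp [him])
  have : μ p = z * ω := by
    rw [hz, mul_assoc, hωconj, mul_one]
  rw [this, hzval, hω]; ring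
end

section
/- Let (H, B) be an abelian real-nonnegative hypergroup with characters B̂ = {μ_1, ..., μ_m}, where the dual multiplication is defined by (μ_j ⋆ μ_k)(x_i/d_i) = μ_j(x_i/d_i)·μ_k(x_i/d_i) extended linearly. If μ_j and μ_k are characters with |μ_j(x_i)| = |μ_k(x_i)| = d_i for all i (i.e., grouplike elements of the dual), then μ_j ⋆ μ_k is again an algebra character of H satisfying |(μ_j ⋆ μ_k)(x_i)| = d_i for all i. Hence the grouplike elements of the dual form a group. -/
open scoped BigOperators

lemma grouplike_key {m : ℕ} (N : Fin m → Fin m → Fin m → ℝ)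
    (d : Fin m → ℝ) (μ : Fin m → ℂ)
    (hnneg : ∀ i j k, 0 ≤ N i j k)
    (hdpos : ∀ i, 0 < d i)
    (hdmul : ∀ a b, d a * d b = ∑ k, N a b k * d k)
    (hμmul : ∀ a b, μ a * μ b = ∑ k, (N a b k : ℂ) * μ k)
    (hμg : ∀ i, ‖μ i‖ = d i) :
    ∀ a b k, N a b k ≠ 0 → ((d a : ℂ) * d b) * μ k = μ a * μ b * d k := by
  intro a b k hk
  set z : ℂ := μ a * μ b with hz
  have habs : ‖z‖ = d a * d b := by rw [hz, norm_mul, hμg, hμg]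
  -- sum of real parts
  have h1 : ∑ j, N a b j * ((starRingEnd ℂ) z * μ j).re = (d a * d b) * (d a * d b) := by
    have : ((starRingEnd ℂ) z * ∑ j, (N a b j : ℂ) * μ j).re
        = ∑ j, N a b j * ((starRingEnd ℂ) z * μ j).re := by
      rw [Finset.mul_sum, Complex.re_sum]
      refine Finset.sum_congr rfl fun j _ => ?_
      rw [mul_left_comm, Complex.re_ofReal_mul]
    rw [← this, ← hμmul, ← hz]
    have : (starRingEnd ℂ) z * z = ((‖z‖)^2 : ℝ) := by
      rw [mul_comm, Complex.mul_conj']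
      push_cast; ring
    rw [this, habs, Complex.ofReal_re]; ring
  have h2 : ∑ j, N a b j * ((d a * d b) * d j) = (d a * d b) * (d a * d b) := by
    rw [show ∑ j, N a b j * ((d a * d b) * d j) = (d a * d b) * ∑ j, N a b j * d j by
      rw [Finset.mul_sum]; refine Finset.sum_congr rfl fun j _ => by ring]
    rw [← hdmul]
  have hle : ∀ j ∈ Finset.univ, N a b j * ((starRingEnd ℂ) z * μ j).re
      ≤ N a b j * ((d a * d b) * d j) := by
    intro j _
    refine mul_le_mul_of_nonneg_left ?_ (hnneg a b j)
    calc ((starRingEnd ℂ) z * μ j).re ≤ ‖(starRingEnd ℂ) z * μ j‖ :=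
          Complex.re_le_norm _
      _ = (d a * d b) * d j := by rw [norm_mul, Complex.norm_conj, habs, hμg]
  have heq : ∀ j ∈ Finset.univ, N a b j * ((starRingEnd ℂ) z * μ j).re
      = N a b j * ((d a * d b) * d j) :=
    (Finset.sum_eq_sum_iff_of_le hle).mp (h1.trans h2.symm)
  have hk' : ((starRingEnd ℂ) z * μ k).re = (d a * d b) * d k :=
    mul_left_cancel₀ hk (heq k (Finset.mem_univ k))
  -- equality in re ≤ abs forces the number to be real positive
  set w : ℂ := (starRingEnd ℂ) z * μ k with hw
  have habsw : ‖w‖ = (d a * d b) * d k := by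
    rw [hw, norm_mul, Complex.norm_conj, habs, hμg]
  have him : w.im = 0 := by
    have h3 : w.re ^ 2 + w.im ^ 2 = (‖w‖) ^ 2 := by
      rw [Complex.sq_norm, Complex.normSq_apply]; ring
    have : w.im ^ 2 = 0 := by
      rw [habsw, ← hk'] at h3; nlinarith [h3]
    exact pow_eq_zero_iff (n := 2) (by norm_num) |>.mp this
  have hwval : w = (((d a * d b) * d k : ℝ) : ℂ) := by
    apply Complex.ext
    · rw [hk']; simp
    · rw [him]; simp
  -- multiply by z
  have hzw : z * w = ((‖z‖)^2 : ℝ) * μ k := by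
    rw [hw, ← mul_assoc, mul_comm z ((starRingEnd ℂ) z), mul_comm ((starRingEnd ℂ) z) z,
      Complex.mul_conj']
    push_cast; ring
  have hdd : ((d a * d b : ℝ) : ℂ) ≠ 0 := by
    exact_mod_cast (mul_pos (hdpos a) (hdpos b)).ne'
  have : ((d a * d b : ℝ) : ℂ) * (((d a : ℂ) * d b) * μ k)
      = ((d a * d b : ℝ) : ℂ) * (μ a * μ b * d k) := by
    have h4 := hzw
    rw [hwval, habs] at h4
    rw [hz] at h4
    push_cast at h4 ⊢
    linear_combination -h4
  exact mul_left_cancel₀ hdd this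

/-- in an abelian real-nonnegative hypergroup, if two characters
`μ, ν` satisfy `|μ(x_i)| = |ν(x_i)| = d_i` for all `i` (i.e. they are grouplike
elements of the dual hypergroup), then their dual product
`(μ ⋆ ν)(x_i) = μ(x_i) ν(x_i) / d_i` is again an algebra character of `H`
with `|(μ ⋆ ν)(x_i)| = d_i` for all `i`. Hence the grouplike elements of the
dual form a group. -/
theorem dual_grouplikes_closed_under_mul {m : ℕ} [NeZero m]
    (N : Fin m → Fin m → Fin m → ℝ) (st : Fin m → Fin m)
    (d : Fin m → ℝ) (μ ν : Fin m → ℂ)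
    (hcomm : ∀ i j k, N i j k = N j i k)
    (hassoc : ∀ i j k l, ∑ p, N i j p * N p k l = ∑ q, N j k q * N i q l)
    (hunit : ∀ i k, N 0 i k = if k = i then 1 else 0)
    (hst : ∀ i, st (st i) = i)
    (hnneg : ∀ i j k, 0 ≤ N i j k)
    (hN1pos : ∀ i, 0 < N i (st i) 0)
    (hN0 : ∀ i j, j ≠ st i → N i j 0 = 0)
    (hd0 : d 0 = 1)
    (hdpos : ∀ i, 0 < d i)
    (hdmul : ∀ a b, d a * d b = ∑ k, N a b k * d k)
    -- μ, ν are characters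
    (hμ0 : μ 0 = 1) (hμmul : ∀ a b, μ a * μ b = ∑ k, (N a b k : ℂ) * μ k)
    (hν0 : ν 0 = 1) (hνmul : ∀ a b, ν a * ν b = ∑ k, (N a b k : ℂ) * ν k)
    -- grouplike elements of the dual
    (hμg : ∀ i, ‖μ i‖ = d i)
    (hνg : ∀ i, ‖ν i‖ = d i) :
    (fun i => μ i * ν i / (d i : ℂ)) 0 = 1 ∧
    (∀ a b, (μ a * ν a / (d a : ℂ)) * (μ b * ν b / (d b : ℂ)) =
      ∑ k, (N a b k : ℂ) * (μ k * ν k / (d k : ℂ))) ∧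
    (∀ i, ‖μ i * ν i / (d i : ℂ)‖ = d i) := by
  have hdck : ∀ i, (d i : ℂ) ≠ 0 := fun i => by exact_mod_cast (hdpos i).ne'
  have keyμ := grouplike_key N d μ hnneg hdpos hdmul hμmul hμg
  have keyν := grouplike_key N d ν hnneg hdpos hdmul hνmul hνg
  refine ⟨by simp [hμ0, hν0, hd0], ?_, ?_⟩
  · intro a b
    have hsum : ∑ k, (N a b k : ℂ) * (μ k * ν k / (d k : ℂ))
        = ∑ k, (N a b k : ℂ) * (d k : ℂ)
          * ((μ a * μ b * (ν a * ν b)) / ((d a : ℂ) * d b * ((d a : ℂ) * d b))) := by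
      refine Finset.sum_congr rfl fun k _ => ?_
      by_cases hNk : N a b k = 0
      · simp [hNk]
      · have hμk := keyμ a b k hNk
        have hνk := keyν a b k hNk
        have hprod : ((d a : ℂ) * d b) * ((d a : ℂ) * d b) * (μ k * ν k)
            = μ a * μ b * (ν a * ν b) * ((d k : ℂ) * d k) := by
          linear_combination ((d a : ℂ) * d b * ν k) * hμk + (μ a * μ b * (d k : ℂ)) * hνk
        rw [mul_div_assoc', mul_div_assoc',
          div_eq_div_iff (hdck k)
            (mul_ne_zero (mul_ne_zero (hdck a) (hdck b)) (mul_ne_zero (hdck a) (hdck b)))]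
        linear_combination (N a b k : ℂ) * hprod
    rw [hsum, ← Finset.sum_mul]
    have hs : ∑ k, (N a b k : ℂ) * (d k : ℂ) = (d a : ℂ) * d b := by
      have h := congrArg (fun r : ℝ => (r : ℂ)) (hdmul a b)
      push_cast at h
      exact h.symm
    rw [hs, div_mul_div_comm, mul_div_assoc',
      div_eq_div_iff (mul_ne_zero (hdck a) (hdck b))
        (mul_ne_zero (mul_ne_zero (hdck a) (hdck b)) (mul_ne_zero (hdck a) (hdck b)))]
    ring
  · intro i
    rw [norm_div, norm_mul, hμg, hνg, Complex.norm_real, Real.norm_eq_abs, abs_of_pos (hdpos i)]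
    field_simp
end

section
/- Let (H, B) be an abelian normalizable hypergroup with characters μ_1, ..., μ_m, normalization character μ_1 with d_i := μ_1(x_i) ≠ 0, and let Ê_i ∈ H* be d_i times the dual basis element of x_i (the primitive idempotents of the dual algebra). Then ∏_{j=1}^m μ_j = ∑_{x_i non-vanishing} det(L_{x_i/d_i}) Ê_i, where the product is in the dual algebra with pointwise multiplication on normalized basis elements, the sum runs over basis elements x_i such that μ_j(x_i) ≠ 0 for all j, and det(L_{x_i/d_i}) is the determinant of left multiplication by x_i/d_i on H. -/
open scoped BigOperators Classical

/-- Dedekind linear independence of characters, hand-rolled for a family of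
multiplicative functions `μ j` on the structure constants `N`. -/
lemma dedekind_chars {m : ℕ} [NeZero m]
    (N : Fin m → Fin m → Fin m → ℂ) (μ : Fin m → Fin m → ℂ)
    (hμ1 : ∀ j, μ j 0 = 1)
    (hμmul : ∀ j a b, μ j a * μ j b = ∑ k, N a b k * μ j k)
    (hμinj : Function.Injective μ) :
    ∀ s : Finset (Fin m), ∀ c : Fin m → ℂ,
      (∀ i, ∑ j ∈ s, c j * μ j i = 0) → ∀ j ∈ s, c j = 0 := by
  intro s
  induction s using Finset.strongInductionOn with
  | _ s ih =>
    intro c hc j0 hj0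
    -- first kill all coefficients other than j0
    have hrest : ∀ j ∈ s.erase j0, c j = 0 := by
      intro j hj
      -- for each a, build a relation on s.erase j0
      have key : ∀ a : Fin m, ∀ j' ∈ s.erase j0, c j' * (μ j' a - μ j0 a) = 0 := by
        intro a
        refine ih (s.erase j0) (Finset.erase_ssubset hj0)
          (fun j' => c j' * (μ j' a - μ j0 a)) ?_
        intro i
        have h1 : ∑ j' ∈ s, c j' * (μ j' a * μ j' i) = 0 := by
          have : ∀ j', c j' * (μ j' a * μ j' i)
              = ∑ k, N a i k * (c j' * μ j' k) := by
            intro j'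
            rw [hμmul j' a i, Finset.mul_sum]
            exact Finset.sum_congr rfl fun k _ => by ring
          simp_rw [this]
          rw [Finset.sum_comm]
          simp_rw [← Finset.mul_sum]
          simp [hc]
        have h2 : ∑ j' ∈ s, c j' * (μ j0 a * μ j' i) = 0 := by
          have : ∑ j' ∈ s, c j' * (μ j0 a * μ j' i)
              = μ j0 a * ∑ j' ∈ s, c j' * μ j' i := by
            rw [Finset.mul_sum]; exact Finset.sum_congr rfl fun k _ => by ring
          rw [this, hc, mul_zero]
        have h3 : ∑ j' ∈ s, c j' * (μ j' a - μ j0 a) * μ j' i = 0 := by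
          have : ∀ j', c j' * (μ j' a - μ j0 a) * μ j' i
              = c j' * (μ j' a * μ j' i) - c j' * (μ j0 a * μ j' i) := by
            intro j'; ring
          simp_rw [this, Finset.sum_sub_distrib, h1, h2, sub_zero]
        rw [← h3]
        rw [Finset.sum_erase_eq_sub hj0]
        simp
      -- μ j ≠ μ j0, pick a where they differ
      have hne : μ j ≠ μ j0 := fun h => (Finset.mem_erase.mp hj).1 (hμinj h)
      obtain ⟨a, ha⟩ := Function.ne_iff.mp hne
      have := key a j hj
      rcases mul_eq_zero.mp this with h | h
      · exact h
      · exact absurd (sub_eq_zero.mp h) ha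
    -- now the relation reduces to c j0 * μ j0 = 0; evaluate at 0
    have h0 := hc 0
    rw [← Finset.add_sum_erase _ _ hj0] at h0
    have : ∑ j ∈ s.erase j0, c j * μ j 0 = 0 :=
      Finset.sum_eq_zero fun j hj => by rw [hrest j hj, zero_mul]
    rw [this, add_zero, hμ1 j0, mul_one] at h0
    exact h0

/-- in an abelian normalizable hypergroup with normalization
character `d` (`d_i = μ_1(x_i) ≠ 0`), the product of all characters in the
dual algebra equals `∑_{x_i non-vanishing} det(L_{x_i/d_i}) Ê_i`, where
`Ê_i = d_i x_i^∘`. Evaluating both sides of this identity in `H*` at each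
basis element `x_l` (on which `Ê_i(x_l) = d_i δ_{il}` and the `⋆`-product of
the characters takes the value `d_l ∏_j μ_j(x_l/d_l)`), the identity reads:
for every `l`, `d_l ∏_j μ_j(x_l/d_l)` equals `det(L_{x_l/d_l}) · d_l` if
`μ_j(x_l) ≠ 0` for all `j`, and `0` otherwise. Here `L_{x_l/d_l}` is the
matrix of left multiplication by `x_l/d_l` on `H` in the basis `B`. -/
theorem product_of_all_characters_eq {m : ℕ} [NeZero m]
    (N : Fin m → Fin m → Fin m → ℂ) (st : Fin m → Fin m)
    (μ : Fin m → Fin m → ℂ) (d : Fin m → ℂ)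
    (hcomm : ∀ i j k, N i j k = N j i k)
    (hassoc : ∀ i j k l, ∑ p, N i j p * N p k l = ∑ q, N j k q * N i q l)
    (hunit : ∀ i k, N 0 i k = if k = i then 1 else 0)
    (hst : ∀ i, st (st i) = i)
    (hN1ne : ∀ i, N i (st i) 0 ≠ 0)
    (hN0 : ∀ i j, j ≠ st i → N i j 0 = 0)
    -- d = μ_1 is a normalization character: an algebra character nonvanishing on B
    (hd0 : d 0 = 1)
    (hdmul : ∀ a b, d a * d b = ∑ k, N a b k * d k)
    (hdne : ∀ i, d i ≠ 0)
    -- the m distinct characters, a complete family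
    (hμ1 : ∀ j, μ j 0 = 1)
    (hμmul : ∀ j a b, μ j a * μ j b = ∑ k, N a b k * μ j k)
    (hμinj : Function.Injective μ)
    (hμcomplete : ∀ f : Fin m → ℂ, f 0 = 1 →
      (∀ a b, f a * f b = ∑ k, N a b k * f k) → ∃ j, f = μ j) :
    ∀ l, d l * ∏ j, (μ j l / d l) =
      if (∀ j, μ j l ≠ 0) then
        (Matrix.of fun k i => N l i k / d l).det * d l
      else 0 := by
  intro l
  -- the character table
  set C : Matrix (Fin m) (Fin m) ℂ := Matrix.of fun j i => μ j i with hC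
  set M : Matrix (Fin m) (Fin m) ℂ := Matrix.of (fun k i => N l i k / d l) with hM
  set D : Matrix (Fin m) (Fin m) ℂ :=
    Matrix.diagonal (fun j => μ j l / d l) with hD
  -- C is nonsingular
  have hCdet : C.det ≠ 0 := by
    intro h
    obtain ⟨v, hv, hvC⟩ := Matrix.exists_vecMul_eq_zero_iff.mpr h
    have : ∀ j, v j = 0 := by
      intro j
      refine dedekind_chars N μ hμ1 hμmul hμinj Finset.univ v ?_ j (Finset.mem_univ j)
      intro i
      have := congrFun hvC i
      simpa [Matrix.vecMul, dotProduct, hC] using this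
    exact hv (funext this)
  -- intertwining: C * M = D * C
  have hCM : C * M = D * C := by
    ext j i
    have hr : (D * C) j i = (μ j l / d l) * μ j i := by
      rw [hD, Matrix.diagonal_mul]; simp [hC]
    rw [hr, Matrix.mul_apply]
    simp only [hC, hM, Matrix.of_apply]
    have : ∑ k, μ j k * (N l i k / d l) = (∑ k, N l i k * μ j k) / d l := by
      rw [Finset.sum_div]
      exact Finset.sum_congr rfl fun k _ => by ring
    rw [this, ← hμmul j l i]
    ring
  -- determinant computation
  have hdet : M.det = ∏ j, (μ j l / d l) := by
    have h1 : C.det * M.det = D.det * C.det := by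
      rw [← Matrix.det_mul, ← Matrix.det_mul, hCM]
    have h2 : M.det = D.det :=
      mul_left_cancel₀ hCdet (by rw [h1, mul_comm])
    rw [h2, hD, Matrix.det_diagonal]
  by_cases hall : ∀ j, μ j l ≠ 0
  · rw [if_pos hall, hdet]
    ring
  · rw [if_neg hall]
    push_neg at hall
    obtain ⟨j, hj⟩ := hall
    rw [Finset.prod_eq_zero (Finset.mem_univ j) (by rw [hj, zero_div]), mul_zero]
end

section
/- Let (H, B) be an abelian real-nonnegative hypergroup and g ∈ B a grouplike element. Then g appears with positive coefficient in x_i x_{i*} if and only if g x_i = FPdim(g) x_i. Moreover, the set of grouplike elements appearing in x_i x_{i*} forms a subgroup of the group of grouplike elements. -/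
open scoped BigOperators

/-- If a product of nonnegatives is positive, both are positive. -/
lemma hyp_mul_pos_parts {x y : ℝ} (hx : 0 ≤ x) (hy : 0 ≤ y) (hxy : 0 < x * y) :
    0 < x ∧ 0 < y := by
  rcases hx.lt_or_eq with h1 | h1
  · rcases hy.lt_or_eq with h2 | h2
    · exact ⟨h1, h2⟩
    · exfalso; rw [← h2, mul_zero] at hxy; exact lt_irrefl 0 hxy
  · exfalso; rw [← h1, zero_mul] at hxy; exact lt_irrefl 0 hxy

/-- in an abelian real-nonnegative hypergroup, a grouplike
element `g` appears with positive coefficient in `x_i x_{i*}` iff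
`g x_i = FPdim(g) x_i`; moreover the grouplike constituents of `x_i x_{i*}`
form a subgroup of the group of grouplike elements (they contain the unit, are
closed under the involution, and the basis element carrying the product of two
of them is again one of them). -/
theorem grouplike_constituents_of_x_xstar {m : ℕ} [NeZero m]
    (N : Fin m → Fin m → Fin m → ℝ) (st : Fin m → Fin m)
    (h : Fin m → ℝ) (d : Fin m → ℝ) (i : Fin m)
    (hcomm : ∀ a b k, N a b k = N b a k)
    (hassoc : ∀ a b k l, ∑ p, N a b p * N p k l = ∑ q, N b k q * N a q l)
    (hunit : ∀ a k, N 0 a k = if k = a then 1 else 0)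
    (hst : ∀ a, st (st a) = a)
    (hnneg : ∀ a b k, 0 ≤ N a b k)
    (hpos : ∀ a, 0 < h a)
    (hN1 : ∀ a, N a (st a) 0 = (h a)⁻¹)
    (hN0 : ∀ a b, b ≠ st a → N a b 0 = 0)
    (hd0 : d 0 = 1)
    (hdpos : ∀ a, 0 < d a)
    (hdmul : ∀ a b, d a * d b = ∑ k, N a b k * d k) :
    (∀ g, IsGrouplike N st h g →
      (0 < N i (st i) g ↔ ∀ k, N g i k = if k = i then d g else 0)) ∧
    (0 < N i (st i) 0) ∧
    (∀ g, IsGrouplike N st h g → 0 < N i (st i) g →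
      IsGrouplike N st h (st g) ∧ 0 < N i (st i) (st g)) ∧
    (∀ g g', IsGrouplike N st h g → IsGrouplike N st h g' →
      0 < N i (st i) g → 0 < N i (st i) g' →
      ∀ k, 0 < N g g' k → IsGrouplike N st h k ∧ 0 < N i (st i) k) := by
  -- h is involution-invariant
  have hStAux : ∀ a, h (st a) = h a := by
    intro a
    have h1 := hN1 (st a)
    rw [hst, hcomm, hN1] at h1
    exact (inv_injective h1).symm
  -- Frobenius symmetry
  have symmA : ∀ a b c, N a b (st c) * (h c)⁻¹ = N b c (st a) * (h a)⁻¹ := by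
    intro a b c
    have key := hassoc a b c 0
    have e1 : ∑ p, N a b p * N p c 0 = N a b (st c) * (h c)⁻¹ := by
      rw [Finset.sum_eq_single (st c)]
      · have h1 : N (st c) c 0 = (h (st c))⁻¹ := by
          have := hN1 (st c); rwa [hst] at this
        rw [h1, hStAux]
      · intro p _ hp
        rw [hN0 p c, mul_zero]
        intro hc
        exact hp (by rw [hc, hst])
      · intro habs; exact absurd (Finset.mem_univ _) habs
    have e2 : ∑ q, N b c q * N a q 0 = N b c (st a) * (h a)⁻¹ := by
      rw [Finset.sum_eq_single (st a)]
      · rw [hN1]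
      · intro q _ hq
        rw [hN0 a q hq, mul_zero]
      · intro habs; exact absurd (Finset.mem_univ _) habs
    rw [← e1, key, e2]
  -- involution of grouplike is grouplike
  have glst : ∀ g, IsGrouplike N st h g → IsGrouplike N st h (st g) := by
    intro g hg k
    rw [hst, hcomm (st g) g, hStAux]
    exact hg k
  -- grouplike off-diagonal coefficients vanish
  have glzero : ∀ g, IsGrouplike N st h g → ∀ p, p ≠ 0 → N g (st g) p = 0 := by
    intro g hg p hp
    have h0 := hg p
    rw [if_neg hp] at h0
    rcases mul_eq_zero.mp h0 with h' | h'
    · exact absurd h' (ne_of_gt (hpos g))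
    · exact h'
  -- convolution identity for grouplikes
  have conv : ∀ g, IsGrouplike N st h g → ∀ a b,
      ∑ q, N g a q * N (st g) q b = (h g)⁻¹ * (if b = a then 1 else 0) := by
    intro g hg a b
    have key := hassoc (st g) g a b
    rw [← key]
    rw [Finset.sum_eq_single (0 : Fin m)]
    · rw [hcomm (st g) g, hN1, hunit]
    · intro p _ hp
      rw [hcomm (st g) g, glzero g hg p hp, zero_mul]
    · intro habs; exact absurd (Finset.mem_univ _) habs
  -- positivity helpers
  have sumPos : ∀ (f : Fin m → ℝ), (∀ x, 0 ≤ f x) → 0 < ∑ x, f x → ∃ x, 0 < f x := by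
    intro f hf hsum
    by_contra hc
    push_neg at hc
    have hz : ∑ x, f x = 0 :=
      Finset.sum_eq_zero (fun x _ => le_antisymm (hc x) (hf x))
    rw [hz] at hsum; exact lt_irrefl 0 hsum
  have termPos : ∀ (f : Fin m → ℝ) (x : Fin m), (∀ y, 0 ≤ f y) → 0 < f x →
      0 < ∑ y, f y := by
    intro f x hf hx
    exact lt_of_lt_of_le hx (Finset.single_le_sum (fun y _ => hf y) (Finset.mem_univ x))
  -- pairing: positive constituent of g·a pairs back
  have pairD : ∀ g a q, IsGrouplike N st h g → 0 < N g a q → 0 < N (st g) q a := by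
    intro g a q hg hq
    have hg' := glst g hg
    have hc := conv (st g) hg' q q
    rw [hst, hStAux, if_pos rfl, mul_one] at hc
    have hpos' : 0 < ∑ r, N (st g) q r * N g r q := by
      rw [hc]; exact inv_pos.mpr (hpos g)
    obtain ⟨p, hp⟩ := sumPos _ (fun r => mul_nonneg (hnneg _ _ _) (hnneg _ _ _)) hpos'
    obtain ⟨hp1, hp2⟩ := hyp_mul_pos_parts (hnneg _ _ _) (hnneg _ _ _) hp
    by_cases hpa : p = a
    · rwa [hpa] at hp1
    · exfalso
      have hc2 := conv g hg a p
      rw [if_neg hpa, mul_zero] at hc2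
      have hgt : 0 < ∑ r, N g a r * N (st g) r p :=
        termPos _ q (fun r => mul_nonneg (hnneg _ _ _) (hnneg _ _ _)) (mul_pos hq hp1)
      rw [hc2] at hgt; exact lt_irrefl 0 hgt
  -- uniqueness of constituents of grouplike products
  have uniqE : ∀ g a q q', IsGrouplike N st h g → 0 < N g a q → 0 < N g a q' →
      q = q' := by
    intro g a q q' hg hq hq'
    have hg' := glst g hg
    have hD := pairD g a q' hg hq'
    have hc := conv (st g) hg' q' q
    rw [hst, hStAux] at hc
    have hterm : 0 < ∑ r, N (st g) q' r * N g r q :=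
      termPos _ a (fun r => mul_nonneg (hnneg _ _ _) (hnneg _ _ _)) (mul_pos hD hq)
    by_contra hne
    rw [if_neg hne, mul_zero] at hc
    rw [hc] at hterm; exact lt_irrefl 0 hterm
  have zeroNe : ∀ g a q k, IsGrouplike N st h g → 0 < N g a q → k ≠ q →
      N g a k = 0 := by
    intro g a q k hg hq hk
    rcases (hnneg g a k).lt_or_eq with h' | h'
    · exact absurd (uniqE g a k q hg h' hq) hk
    · exact h'.symm
  -- forward direction of criterion
  have critFwd : ∀ g, IsGrouplike N st h g → 0 < N i (st i) g →
      ∀ k, N g i k = if k = i then d g else 0 := by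
    intro g hg hposg
    have hA := symmA (st g) i (st i)
    rw [hst i, hst g, hStAux i, hStAux g] at hA
    have h1 : 0 < N (st g) i i := by
      have hrhs : 0 < N i (st i) g * (h g)⁻¹ := mul_pos hposg (inv_pos.mpr (hpos g))
      rw [← hA] at hrhs
      exact (hyp_mul_pos_parts (hnneg _ _ _) (le_of_lt (inv_pos.mpr (hpos i))) hrhs).1
    have h2 : 0 < N g i i := by
      have := pairD (st g) i i (glst g hg) h1
      rwa [hst] at this
    intro k
    by_cases hk : k = i
    · rw [if_pos hk, hk]
      have hsum : ∑ l, N g i l * d l = N g i i * d i := by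
        rw [Finset.sum_eq_single i]
        · intro l _ hl; rw [zeroNe g i i l hg h2 hl, zero_mul]
        · intro habs; exact absurd (Finset.mem_univ _) habs
      have hmm : d g * d i = N g i i * d i := by
        rw [hdmul g i, hsum]
      exact (mul_right_cancel₀ (ne_of_gt (hdpos i)) hmm).symm
    · rw [if_neg hk]
      exact zeroNe g i i k hg h2 hk
  -- backward direction of criterion
  have critBwd : ∀ g, IsGrouplike N st h g → 0 < N g i i → 0 < N i (st i) g := by
    intro g hg h2
    have h1 : 0 < N (st g) i i := pairD g i i hg h2
    have hA := symmA (st g) i (st i)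
    rw [hst i, hst g, hStAux i, hStAux g] at hA
    have hlhs : 0 < N i (st i) g * (h g)⁻¹ := by
      rw [← hA]; exact mul_pos h1 (inv_pos.mpr (hpos i))
    exact (hyp_mul_pos_parts (hnneg _ _ _) (le_of_lt (inv_pos.mpr (hpos g))) hlhs).1
  refine ⟨?_, ?_, ?_, ?_⟩
  · intro g hg
    constructor
    · exact critFwd g hg
    · intro hk
      apply critBwd g hg
      have := hk i
      rw [if_pos rfl] at this
      rw [this]; exact hdpos g
  · rw [hN1]; exact inv_pos.mpr (hpos i)
  · intro g hg hposg
    refine ⟨glst g hg, ?_⟩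
    have hNg : 0 < N g i i := by
      have := critFwd g hg hposg i
      rw [if_pos rfl] at this
      rw [this]; exact hdpos g
    have h1 : 0 < N (st g) i i := pairD g i i hg hNg
    apply critBwd (st g) (glst g hg)
    exact h1
  · intro g g' hg hg' hpg hpg' k hk
    -- k is grouplike
    have hkgl : IsGrouplike N st h k := by
      -- first: 0 < N g' (st k) (st g)
      have hl0 := hassoc g g' (st k) 0
      have eL0 : ∑ p, N g g' p * N p (st k) 0 = N g g' k * (h k)⁻¹ := by
        rw [Finset.sum_eq_single k]
        · rw [hN1]
        · intro p _ hp; rw [zeroNe g g' k p hg hk hp, zero_mul]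
        · intro habs; exact absurd (Finset.mem_univ _) habs
      have eR0 : ∑ q, N g' (st k) q * N g q 0 = N g' (st k) (st g) * (h g)⁻¹ := by
        rw [Finset.sum_eq_single (st g)]
        · rw [hN1]
        · intro q _ hq; rw [hN0 g q hq, mul_zero]
        · intro habs; exact absurd (Finset.mem_univ _) habs
      rw [eL0, eR0] at hl0
      have hcpp : 0 < N g' (st k) (st g) := by
        have hx : 0 < N g' (st k) (st g) * (h g)⁻¹ := by
          rw [← hl0]; exact mul_pos hk (inv_pos.mpr (hpos k))
        exact (hyp_mul_pos_parts (hnneg _ _ _) (le_of_lt (inv_pos.mpr (hpos g))) hx).1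
      -- general l : c * N k (st k) l = c'' * N g (st g) l
      intro l
      by_cases hl : l = 0
      · subst hl
        rw [if_pos rfl, hN1, mul_inv_cancel₀ (ne_of_gt (hpos k))]
      · rw [if_neg hl]
        have hll := hassoc g g' (st k) l
        have eL : ∑ p, N g g' p * N p (st k) l = N g g' k * N k (st k) l := by
          rw [Finset.sum_eq_single k]
          · intro p _ hp; rw [zeroNe g g' k p hg hk hp, zero_mul]
          · intro habs; exact absurd (Finset.mem_univ _) habs
        have eR : ∑ q, N g' (st k) q * N g q l = N g' (st k) (st g) * N g (st g) l := by
          rw [Finset.sum_eq_single (st g)]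
          · intro q _ hq; rw [zeroNe g' (st k) (st g) q hg' hcpp hq, zero_mul]
          · intro habs; exact absurd (Finset.mem_univ _) habs
        rw [eL, eR, glzero g hg l hl, mul_zero] at hll
        have hz : N k (st k) l = 0 := by
          rcases mul_eq_zero.mp hll with h' | h'
          · exact absurd h' (ne_of_gt hk)
          · exact h'
        rw [hz, mul_zero]
    refine ⟨hkgl, ?_⟩
    -- 0 < N k i i = d k, then criterion
    have hRi := hassoc g g' i i
    have eL : ∑ p, N g g' p * N p i i = N g g' k * N k i i := by
      rw [Finset.sum_eq_single k]
      · intro p _ hp; rw [zeroNe g g' k p hg hk hp, zero_mul]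
      · intro habs; exact absurd (Finset.mem_univ _) habs
    have eR : ∑ q, N g' i q * N g q i = d g' * d g := by
      rw [Finset.sum_eq_single i]
      · rw [critFwd g' hg' hpg' i, if_pos rfl, critFwd g hg hpg i, if_pos rfl]
      · intro q _ hq; rw [critFwd g' hg' hpg' q, if_neg hq, zero_mul]
      · intro habs; exact absurd (Finset.mem_univ _) habs
    rw [eL, eR] at hRi
    have hdk : d g * d g' = N g g' k * d k := by
      rw [hdmul g g', Finset.sum_eq_single k]
      · intro q _ hq; rw [zeroNe g g' k q hg hk hq, zero_mul]
      · intro habs; exact absurd (Finset.mem_univ _) habs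
    have hfin : N g g' k * N k i i = N g g' k * d k := by
      rw [hRi, mul_comm (d g') (d g), hdk]
    have hNkii : N k i i = d k := mul_left_cancel₀ (ne_of_gt hk) hfin
    exact critBwd k hkgl (by rw [hNkii]; exact hdpos k)
end
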